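/- If X is uniformly distributed on (0, θ) with θ > 0 and 0 < α ≠ 1, then ξ_α^w(X) = θ²(α+4)/(6(α+1)(α+2)). -/

import Mathlib

open MeasureTheory Set

lemma rpow_integral_aux (θ β : ℝ) (hθ : 0 < θ) (hβ : 0 < β) :
    ∫ x in (0:ℝ)..θ, (1 - x/θ) ^ β = θ / (β + 1) := by
  have hcong : ∀ x : ℝ, (1 - x/θ) ^ β = ((θ - x)/θ) ^ β := by
    intro x
    congr 1
    field_simp
  simp_rw [hcong]
  have h1 : ∫ x in (0:ℝ)..θ, ((θ - x)/θ) ^ β = ∫ x in (θ - θ)..(θ - 0), (x/θ) ^ β := by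
    exact intervalIntegral.integral_comp_sub_left (fun y => (y/θ) ^ β) θ
  rw [h1]
  simp only [sub_self, sub_zero]
  have h2 : ∫ x in (0:ℝ)..θ, (x/θ) ^ β = θ • ∫ x in (0/θ)..(θ/θ), x ^ β := by
    exact intervalIntegral.integral_comp_div (fun y => y ^ β) hθ.ne'
  rw [h2]
  rw [zero_div, div_self hθ.ne']
  rw [integral_rpow (Or.inl (by linarith))]
  rw [Real.one_rpow, Real.zero_rpow (by linarith)]
  rw [smul_eq_mul]
  ring

theorem wcrte_uniform (θ α : ℝ) (hθ : 0 < θ) (hα : 0 < α) (hα1 : α ≠ 1) :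
    (1/(α-1)) * ∫ x in Set.Ioo 0 θ, x * ((1 - x/θ) - (1 - x/θ) ^ α)
      = θ ^ 2 * (α + 4) / (6 * (α + 1) * (α + 2)) := by
  have hset : ∫ x in Set.Ioo 0 θ, x * ((1 - x/θ) - (1 - x/θ) ^ α)
      = ∫ x in (0:ℝ)..θ, x * ((1 - x/θ) - (1 - x/θ) ^ α) := by
    rw [intervalIntegral.integral_of_le hθ.le, MeasureTheory.integral_Ioc_eq_integral_Ioo]
  rw [hset]
  have hcont1 : Continuous fun x : ℝ => x * (1 - x/θ) := by continuity
  have hcont2 : Continuous fun x : ℝ => x * (1 - x/θ) ^ α := by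
    apply Continuous.mul continuous_id
    exact Continuous.rpow_const (by continuity) (fun x => Or.inr hα.le)
  have hsplit : ∫ x in (0:ℝ)..θ, x * ((1 - x/θ) - (1 - x/θ) ^ α)
      = (∫ x in (0:ℝ)..θ, x * (1 - x/θ)) - ∫ x in (0:ℝ)..θ, x * (1 - x/θ) ^ α := by
    rw [← intervalIntegral.integral_sub (hcont1.intervalIntegrable _ _)
      (hcont2.intervalIntegrable _ _)]
    congr 1
    ext x
    ring
  rw [hsplit]
  have hI1 : ∫ x in (0:ℝ)..θ, x * (1 - x/θ) = θ ^ 2 / 6 := by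
    have : ∀ x : ℝ, x * (1 - x/θ) = x - x ^ 2 / θ := by intro x; ring
    simp_rw [this]
    rw [intervalIntegral.integral_sub (by apply Continuous.intervalIntegrable; continuity)
      (by apply Continuous.intervalIntegrable; continuity)]
    simp_rw [div_eq_mul_inv]
    rw [intervalIntegral.integral_mul_const, integral_id, integral_pow]
    field_simp
    ring
  have hI2 : ∫ x in (0:ℝ)..θ, x * (1 - x/θ) ^ α = θ ^ 2 / ((α + 1) * (α + 2)) := by
    have hcong : ∀ x ∈ Set.uIcc (0:ℝ) θ,
        x * (1 - x/θ) ^ α = θ * (1 - x/θ) ^ α - θ * (1 - x/θ) ^ (α + 1) := by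
      intro x hx
      rw [Set.uIcc_of_le hθ.le] at hx
      have hb : (0:ℝ) ≤ 1 - x/θ := by
        rw [sub_nonneg, div_le_one hθ]
        exact hx.2
      rw [Real.rpow_add' hb (by linarith), Real.rpow_one]
      have : θ - θ * (1 - x/θ) = x := by field_simp; ring
      nth_rewrite 1 [← this]
      ring
    rw [intervalIntegral.integral_congr hcong]
    have hint : ∀ β : ℝ, 0 < β → IntervalIntegrable (fun x => θ * (1 - x/θ) ^ β)
        MeasureTheory.volume 0 θ := by
      intro β hβ
      apply Continuous.intervalIntegrable
      exact continuous_const.mul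
        (Continuous.rpow_const (by continuity) (fun x => Or.inr hβ.le))
    rw [intervalIntegral.integral_sub (hint α hα) (hint (α+1) (by linarith))]
    rw [intervalIntegral.integral_const_mul, intervalIntegral.integral_const_mul]
    rw [rpow_integral_aux θ α hθ hα, rpow_integral_aux θ (α+1) hθ (by linarith)]
    have h1 : α + 1 ≠ 0 := by linarith
    have h2 : α + 2 ≠ 0 := by linarith
    field_simp
    ring
  rw [hI1, hI2]
  have h1 : α + 1 ≠ 0 := by linarith
  have h2 : α + 2 ≠ 0 := by linarith
  have h3 : α - 1 ≠ 0 := sub_ne_zero.mpr hα1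
  field_simp
  ring
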